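/- Let μ_λ ≤ 0 ≤ μ_x be real numbers, let γ > 0, and let λ₁, …, λ_m be finitely many real constants with μ_λ ≤ λᵢ ≤ 0 for all i. Define f(x) = max over i of 1/√(1 + γ(x + λᵢ)²). Then f is Lipschitz continuous on the interval [0, μ_x] with Lipschitz constant L_f satisfying: L_f ≤ (2/(3√3))·√γ if γ ≥ 1/(2·max{μ_λ², μ_x²}), and L_f ≤ γ·max{−μ_λ, μ_x}·(1 + γ·max{μ_λ², μ_x²})^{−3/2} otherwise; in either case L_f ≤ (2/(3√3))·√γ. -/

import Mathlib

open Matrix Filter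
open scoped Classical

/-- Euclidean norm of a vector. -/
noncomputable def euclNorm {n : Type*} [Fintype n] (v : n → ℝ) : ℝ :=
  Real.sqrt (∑ i, v i ^ 2)

/-- Spectral norm (largest singular value) of a matrix: the supremum of
`‖M x‖₂` over the Euclidean unit ball. -/
noncomputable def specNorm {m n : Type*} [Fintype m] [Fintype n] (M : Matrix m n ℝ) : ℝ :=
  sSup {y | ∃ x : n → ℝ, euclNorm x ≤ 1 ∧ y = euclNorm (M.mulVec x)}

/-- `A^{-1/2}`: the inverse of the positive semidefinite square root of `A`
(junk value `0` if `A` is not positive semidefinite). -/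
noncomputable def invSqrt {n : Type*} [Fintype n] [DecidableEq n]
    (A : Matrix n n ℝ) : Matrix n n ℝ :=
  if h : A.PosSemidef then
    ((h.1.eigenvectorUnitary : Matrix n n ℝ) *
      diagonal ((↑) ∘ Real.sqrt ∘ h.1.eigenvalues) *
      (star h.1.eigenvectorUnitary : Matrix n n ℝ))⁻¹ else 0

/-- Squared Frobenius norm helper via entries, and Frobenius norm. -/
noncomputable def frobNorm {m n : Type*} [Fintype m] [Fintype n] (M : Matrix m n ℝ) : ℝ :=
  Real.sqrt (∑ i, ∑ j, M i j ^ 2)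

/-- Frobenius (trace) inner product. -/
noncomputable def frobInner {m n : Type*} [Fintype m] [Fintype n]
    (A B : Matrix m n ℝ) : ℝ :=
  ∑ i, ∑ j, A i j * B i j


lemma deriv_g (γ lam : ℝ) (hγ : 0 < γ) (x : ℝ) :
    HasDerivAt (fun x => 1 / Real.sqrt (1 + γ * (x + lam) ^ 2))
      (-(γ * (x + lam)) / ((1 + γ * (x + lam) ^ 2) * Real.sqrt (1 + γ * (x + lam) ^ 2))) x := by
  set t := x + lam with ht
  have hu : (0:ℝ) < 1 + γ * t ^ 2 := by positivity
  have hs : 0 < Real.sqrt (1 + γ * t ^ 2) := Real.sqrt_pos.mpr hu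
  have h1 : HasDerivAt (fun x => 1 + γ * (x + lam) ^ 2) (γ * (2 * t)) x := by
    have := (((hasDerivAt_id x).add_const lam).pow 2).const_mul γ
    simpa [ht, mul_comm, mul_assoc, mul_left_comm] using this.const_add 1
  have h2 := (h1.sqrt (by positivity)).inv (ne_of_gt hs)
  have heq : -(γ * (2 * t) / (2 * Real.sqrt (1 + γ * t ^ 2))) / Real.sqrt (1 + γ * t ^ 2) ^ 2
      = -(γ * t) / ((1 + γ * t ^ 2) * Real.sqrt (1 + γ * t ^ 2)) := by
    rw [Real.sq_sqrt hu.le]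
    field_simp
  rw [← heq]
  simp only [one_div]; exact h2

lemma abs_ciSup_sub {m : ℕ} (hm : 0 < m) (a b : Fin m → ℝ) (c : ℝ)
    (h : ∀ i, |a i - b i| ≤ c) : |(⨆ i, a i) - ⨆ i, b i| ≤ c := by
  haveI : Nonempty (Fin m) := ⟨⟨0, hm⟩⟩
  have bA : BddAbove (Set.range a) := (Set.finite_range a).bddAbove
  have bB : BddAbove (Set.range b) := (Set.finite_range b).bddAbove
  rw [abs_sub_le_iff]
  constructor
  · rw [sub_le_iff_le_add]
    apply ciSup_le; intro i
    have h1 := (abs_sub_le_iff.mp (h i)).1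
    have h2 := le_ciSup bB i
    linarith
  · rw [sub_le_iff_le_add]
    apply ciSup_le; intro i
    have h1 := (abs_sub_le_iff.mp (h i)).2
    have h2 := le_ciSup bA i
    linarith

lemma lip_one (μx γ lam L : ℝ) (hγ : 0 < γ)
    (hL : ∀ y ∈ Set.Icc (0:ℝ) μx,
      |γ * (y + lam)| / ((1 + γ * (y + lam) ^ 2) * Real.sqrt (1 + γ * (y + lam) ^ 2)) ≤ L)
    {x x' : ℝ} (hx : x ∈ Set.Icc (0:ℝ) μx) (hx' : x' ∈ Set.Icc (0:ℝ) μx) :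
    |1 / Real.sqrt (1 + γ * (x + lam) ^ 2) - 1 / Real.sqrt (1 + γ * (x' + lam) ^ 2)|
      ≤ L * |x - x'| := by
  have hbd : ∀ y ∈ Set.Icc (0:ℝ) μx,
      ‖-(γ * (y + lam)) / ((1 + γ * (y + lam) ^ 2) * Real.sqrt (1 + γ * (y + lam) ^ 2))‖ ≤ L := by
    intro y hy
    have hu : (0:ℝ) < 1 + γ * (y + lam) ^ 2 := by positivity
    have : (0:ℝ) < (1 + γ * (y + lam) ^ 2) * Real.sqrt (1 + γ * (y + lam) ^ 2) := by
      positivity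
    rw [Real.norm_eq_abs, abs_div, abs_neg, abs_of_pos this]
    exact hL y hy
  have := Convex.norm_image_sub_le_of_norm_hasDerivWithin_le
    (f := fun x => 1 / Real.sqrt (1 + γ * (x + lam) ^ 2))
    (fun y (hy : y ∈ Set.Icc (0:ℝ) μx) => (deriv_g γ lam hγ y).hasDerivWithinAt)
    hbd (convex_Icc 0 μx) hx' hx
  simpa [Real.norm_eq_abs] using this


lemma bound1 (γ t : ℝ) (hγ : 0 < γ) :
    |γ * t| / ((1 + γ * t ^ 2) * Real.sqrt (1 + γ * t ^ 2))
      ≤ 2 / (3 * Real.sqrt 3) * Real.sqrt γ := by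
  have hu : (0:ℝ) < 1 + γ * t ^ 2 := by positivity
  have hs3 : Real.sqrt 3 ^ 2 = 3 := Real.sq_sqrt (by norm_num)
  have hsg : Real.sqrt γ ^ 2 = γ := Real.sq_sqrt hγ.le
  have hsu : Real.sqrt (1 + γ * t ^ 2) ^ 2 = 1 + γ * t ^ 2 := Real.sq_sqrt hu.le
  have h3 : (0:ℝ) < Real.sqrt 3 := Real.sqrt_pos.mpr (by norm_num)
  have hsupos : 0 < Real.sqrt (1 + γ * t ^ 2) := Real.sqrt_pos.mpr hu
  have hsgpos : 0 < Real.sqrt γ := Real.sqrt_pos.mpr hγ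
  have key : (|γ * t| / ((1 + γ * t ^ 2) * Real.sqrt (1 + γ * t ^ 2))) ^ 2
      ≤ (2 / (3 * Real.sqrt 3) * Real.sqrt γ) ^ 2 := by
    have e1 : (|γ * t| / ((1 + γ * t ^ 2) * Real.sqrt (1 + γ * t ^ 2))) ^ 2
        = γ ^ 2 * t ^ 2 / (1 + γ * t ^ 2) ^ 3 := by
      rw [div_pow, mul_pow, hsu, sq_abs]; ring_nf
    have e2 : (2 / (3 * Real.sqrt 3) * Real.sqrt γ) ^ 2 = 4 * γ / 27 := by
      rw [mul_pow, div_pow, mul_pow, hs3, hsg]; ring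
    rw [e1, e2, div_le_div_iff₀ (by positivity) (by norm_num)]
    nlinarith [mul_nonneg (mul_nonneg hγ.le (sq_nonneg (2 * γ * t ^ 2 - 1)))
      (by positivity : (0:ℝ) ≤ γ * t ^ 2 + 4)]
  exact (pow_le_pow_iff_left₀ (by positivity) (by positivity) two_ne_zero).mp key

lemma bound2 (γ t M : ℝ) (hγ : 0 < γ) (hM : 0 ≤ M) (hS : γ * M ^ 2 ≤ 1 / 2)
    (ht : t ^ 2 ≤ M ^ 2) :
    |γ * t| / ((1 + γ * t ^ 2) * Real.sqrt (1 + γ * t ^ 2))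
      ≤ γ * M / ((1 + γ * M ^ 2) * Real.sqrt (1 + γ * M ^ 2)) := by
  have hu : (0:ℝ) < 1 + γ * t ^ 2 := by positivity
  have hv : (0:ℝ) < 1 + γ * M ^ 2 := by positivity
  have hsu : Real.sqrt (1 + γ * t ^ 2) ^ 2 = 1 + γ * t ^ 2 := Real.sq_sqrt hu.le
  have hsv : Real.sqrt (1 + γ * M ^ 2) ^ 2 = 1 + γ * M ^ 2 := Real.sq_sqrt hv.le
  have hsupos : 0 < Real.sqrt (1 + γ * t ^ 2) := Real.sqrt_pos.mpr hu
  have hsvpos : 0 < Real.sqrt (1 + γ * M ^ 2) := Real.sqrt_pos.mpr hv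
  have key : (|γ * t| / ((1 + γ * t ^ 2) * Real.sqrt (1 + γ * t ^ 2))) ^ 2
      ≤ (γ * M / ((1 + γ * M ^ 2) * Real.sqrt (1 + γ * M ^ 2))) ^ 2 := by
    have e1 : (|γ * t| / ((1 + γ * t ^ 2) * Real.sqrt (1 + γ * t ^ 2))) ^ 2
        = γ ^ 2 * t ^ 2 / (1 + γ * t ^ 2) ^ 3 := by
      rw [div_pow, mul_pow, hsu, sq_abs]; ring_nf
    have e2 : (γ * M / ((1 + γ * M ^ 2) * Real.sqrt (1 + γ * M ^ 2))) ^ 2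
        = γ ^ 2 * M ^ 2 / (1 + γ * M ^ 2) ^ 3 := by
      rw [div_pow, mul_pow, mul_pow, hsv]; ring_nf
    rw [e1, e2, div_le_div_iff₀ (by positivity) (by positivity)]
    set s := γ * t ^ 2 with hsdef
    set S := γ * M ^ 2 with hSdef
    have hs0 : 0 ≤ s := by positivity
    have hS0 : 0 ≤ S := by positivity
    have hsS : s ≤ S := by
      apply mul_le_mul_of_nonneg_left ht hγ.le
    have hshalf : s ≤ 1 / 2 := hsS.trans hS
    have hp : s * S ≤ 1 / 4 := by nlinarith
    have hq : s * S * (3 + s + S) ≤ 1 / 4 * 4 :=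
      mul_le_mul hp (by linarith) (by positivity) (by norm_num)
    have hfac : 0 ≤ 1 - s * S * (3 + s + S) := by linarith
    have hmain : s * (1 + S) ^ 3 ≤ S * (1 + s) ^ 3 := by
      nlinarith [mul_nonneg (sub_nonneg.mpr hsS) hfac]
    calc γ ^ 2 * t ^ 2 * (1 + S) ^ 3 = γ * (s * (1 + S) ^ 3) := by rw [hsdef]; ring
      _ ≤ γ * (S * (1 + s) ^ 3) := by
          exact mul_le_mul_of_nonneg_left hmain hγ.le
      _ = γ ^ 2 * M ^ 2 * (1 + s) ^ 3 := by rw [hSdef]; ring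
  exact (pow_le_pow_iff_left₀ (by positivity) (by positivity) two_ne_zero).mp key

lemma rpow_neg_threehalf (v : ℝ) (hv : 0 < v) :
    v ^ (-(3/2) : ℝ) = 1 / (v * Real.sqrt v) := by
  have h1 : v ^ ((3:ℝ)/2) = v * Real.sqrt v := by
    rw [show (3:ℝ)/2 = 1 + 1/2 by norm_num, Real.rpow_add hv, Real.rpow_one,
      ← Real.sqrt_eq_rpow]
  rw [show (-(3/2) : ℝ) = -(3/2 : ℝ) by norm_num, Real.rpow_neg hv.le, h1, one_div]

/-- Lipschitz bound for `f(x) = maxᵢ 1/√(1 + γ(x + λᵢ)²)` on `[0, μx]`. -/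
theorem stmt1 {m : ℕ} (hm : 0 < m) (μl μx γ : ℝ) (hμl : μl ≤ 0) (hμx : 0 ≤ μx)
    (hγ : 0 < γ) (lam : Fin m → ℝ) (hlam : ∀ i, μl ≤ lam i ∧ lam i ≤ 0)
    (f : ℝ → ℝ) (hf : ∀ x, f x = ⨆ i, 1 / Real.sqrt (1 + γ * (x + lam i) ^ 2)) :
    (∀ x ∈ Set.Icc (0 : ℝ) μx, ∀ x' ∈ Set.Icc (0 : ℝ) μx,
      |f x - f x'| ≤
        (if 1 / (2 * max (μl ^ 2) (μx ^ 2)) ≤ γ then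
            2 / (3 * Real.sqrt 3) * Real.sqrt γ
          else
            γ * max (-μl) μx * (1 + γ * max (μl ^ 2) (μx ^ 2)) ^ (-(3/2) : ℝ))
        * |x - x'|) ∧
    (∀ x ∈ Set.Icc (0 : ℝ) μx, ∀ x' ∈ Set.Icc (0 : ℝ) μx,
      |f x - f x'| ≤ 2 / (3 * Real.sqrt 3) * Real.sqrt γ * |x - x'|) := by
  have H : ∀ L : ℝ, (∀ t ∈ Set.Icc μl μx,
      |γ * t| / ((1 + γ * t ^ 2) * Real.sqrt (1 + γ * t ^ 2)) ≤ L) →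
      ∀ x ∈ Set.Icc (0 : ℝ) μx, ∀ x' ∈ Set.Icc (0 : ℝ) μx,
        |f x - f x'| ≤ L * |x - x'| := by
    intro L hL x hx x' hx'
    rw [hf x, hf x']
    apply abs_ciSup_sub hm
    intro i
    apply lip_one μx γ (lam i) L hγ _ hx hx'
    intro y hy
    apply hL
    exact ⟨by linarith [(hlam i).1, hy.1], by linarith [(hlam i).2, hy.2]⟩
  have huniv : ∀ x ∈ Set.Icc (0 : ℝ) μx, ∀ x' ∈ Set.Icc (0 : ℝ) μx,
      |f x - f x'| ≤ 2 / (3 * Real.sqrt 3) * Real.sqrt γ * |x - x'| :=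
    H _ (fun t _ => bound1 γ t hγ)
  refine ⟨?_, huniv⟩
  by_cases hc : 1 / (2 * max (μl ^ 2) (μx ^ 2)) ≤ γ
  · intro x hx x' hx'
    rw [if_pos hc]
    exact huniv x hx x' hx'
  · rw [if_neg hc]
    set K := max (μl ^ 2) (μx ^ 2) with hKdef
    set M := max (-μl) μx with hMdef
    have hM0 : 0 ≤ M := le_trans (neg_nonneg.mpr hμl) (le_max_left _ _)
    have hMsq : M ^ 2 = K := by
      rcases le_total (-μl) μx with h | h
      · rw [hMdef, hKdef, max_eq_right h, max_eq_right (by nlinarith : μl ^ 2 ≤ μx ^ 2)]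
      · rw [hMdef, hKdef, max_eq_left h, max_eq_left (by nlinarith : μx ^ 2 ≤ μl ^ 2)]
        ring
    have hK0' : (0:ℝ) ≤ K := le_max_of_le_left (sq_nonneg μl)
    have hK0 : 0 < K := by
      rcases eq_or_lt_of_le hK0' with h | h
      · exfalso; apply hc; rw [← h, mul_zero, div_zero]; exact hγ.le
      · exact h
    have hSle : γ * M ^ 2 ≤ 1 / 2 := by
      rw [hMsq]
      have : γ < 1 / (2 * K) := lt_of_not_ge hc
      rw [lt_div_iff₀ (by positivity)] at this
      nlinarith
    have hV : (0:ℝ) < 1 + γ * K := by positivity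
    have hconst : γ * M * (1 + γ * K) ^ (-(3/2) : ℝ)
        = γ * M / ((1 + γ * K) * Real.sqrt (1 + γ * K)) := by
      rw [rpow_neg_threehalf _ hV, mul_one_div]
    rw [hconst, ← hMsq]
    apply H
    intro t ht
    apply bound2 γ t M hγ hM0 hSle
    have h1 : -M ≤ t := by
      have : -M ≤ μl := by
        rw [hMdef]; have := le_max_left (-μl) μx; linarith
      linarith [ht.1]
    have h2 : t ≤ M := le_trans ht.2 (le_max_right _ _)
    nlinarith
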